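/- Let (Ω, ℙ) be a probability space and X : Ω → ℝ^D a square-integrable random vector with mean μ = E[X] and Cov(X) = V · diag(s) · Vᵀ, where V ∈ ℝ^{D×D} is orthogonal and s ∈ ℝ^D has nonnegative entries. Let T ⊆ {1,…,D} with |T| = r be a set of indices with s_i > 0 for every i ∈ T, let V̂ ∈ ℝ^{D×r} be the submatrix of V formed by the columns indexed by T, and set Z = V̂V̂ᵀ(X − μ) + μ. Then for every matrix P ∈ ℝ^{D×D}: (i) Cov(PX, Z) = P · Cov(X) · V̂V̂ᵀ, and (ii) Cov(PX, Z) = 0 if and only if P·V̂ = 0. -/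

import Mathlib

open MeasureTheory Matrix

/-- Componentwise mean of a random vector. -/
noncomputable def vecMean {Ω : Type*} [MeasureSpace Ω] {D : ℕ} (X : Ω → Fin D → ℝ) :
    Fin D → ℝ := fun i => ∫ ω, X ω i

/-- Cross-covariance matrix `Cov(Y,Z)ᵢⱼ = E[(Yᵢ − E[Yᵢ])(Zⱼ − E[Zⱼ])]`. -/
noncomputable def crossCov {Ω : Type*} [MeasureSpace Ω] {m n : ℕ}
    (Y : Ω → Fin m → ℝ) (Z : Ω → Fin n → ℝ) : Matrix (Fin m) (Fin n) ℝ :=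
  Matrix.of fun i j => ∫ ω, (Y ω i - vecMean Y i) * (Z ω j - vecMean Z j)

/-- For `Z = V̂V̂ᵀ(X − μ) + μ`, every matrix `P` satisfies
(i) `Cov(PX, Z) = P·Cov(X)·V̂V̂ᵀ`, and (ii) `Cov(PX, Z) = 0 ↔ P·V̂ = 0`. -/
theorem crossCov_vanishes_iff_kills_columns
    {Ω : Type*} [MeasureSpace Ω] [IsProbabilityMeasure (volume : Measure Ω)]
    {D r : ℕ}
    (X : Ω → Fin D → ℝ)
    (hX : ∀ i, MemLp (fun ω => X ω i) 2 volume)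
    (μ : Fin D → ℝ) (hμ : μ = vecMean X)
    (V : Matrix (Fin D) (Fin D) ℝ) (hV : Vᵀ * V = 1)
    (s : Fin D → ℝ) (hs : ∀ i, 0 ≤ s i)
    (hCovX : crossCov X X = V * Matrix.diagonal s * Vᵀ)
    (f : Fin r → Fin D) (hf : Function.Injective f)
    (hfs : ∀ k, 0 < s (f k))
    (Vhat : Matrix (Fin D) (Fin r) ℝ) (hVhat : Vhat = V.submatrix id f)
    (Z : Ω → Fin D → ℝ)
    (hZ : ∀ ω, Z ω = (Vhat * Vhatᵀ).mulVec (X ω - μ) + μ) :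
    ∀ P : Matrix (Fin D) (Fin D) ℝ,
      crossCov (fun ω => P.mulVec (X ω)) Z = P * crossCov X X * (Vhat * Vhatᵀ) ∧
      (crossCov (fun ω => P.mulVec (X ω)) Z = 0 ↔ P * Vhat = 0) := by
  subst hVhat
  set W : Matrix (Fin D) (Fin r) ℝ := V.submatrix id f with hW
  set M : Matrix (Fin D) (Fin D) ℝ := W * Wᵀ with hMdef
  intro P
  -- integrability facts
  have hXint : ∀ i, Integrable (fun ω => X ω i) volume :=
    fun i => (hX i).integrable (by norm_num)
  have hXc : ∀ i, MemLp (fun ω => X ω i - μ i) 2 volume :=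
    fun i => (hX i).sub (memLp_const _)
  have hXcint : ∀ i, Integrable (fun ω => X ω i - μ i) volume :=
    fun i => (hXint i).sub (integrable_const _)
  have hprod : ∀ k l, Integrable (fun ω => (X ω k - μ k) * (X ω l - μ l)) volume := by
    intro k l
    have h2 : (1 : ENNReal)/1 = 1/2 + 1/2 := by
      rw [ENNReal.div_add_div_same]; norm_num [ENNReal.div_self]
    have := (hXc l).smul (r := 1) (hXc k)
    rw [← memLp_one_iff_integrable]
    simpa [smul_eq_mul, Pi.mul_def] using this
  have hmean0 : ∀ i, (∫ ω, (X ω i - μ i)) = 0 := by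
    intro i
    rw [integral_sub (hXint i) (integrable_const _), integral_const]
    simp [hμ, vecMean, measure_univ]
  have hC : ∀ k l, crossCov X X k l = ∫ ω, (X ω k - μ k) * (X ω l - μ l) := by
    intro k l
    rw [hμ]; rfl
  -- centering of Z
  have hZc : ∀ ω j, Z ω j - μ j = ∑ l, M j l * (X ω l - μ l) := by
    intro ω j
    rw [hZ]
    simp [Matrix.mulVec, dotProduct]
  have hmeanZ : ∀ j, vecMean Z j = μ j := by
    intro j
    have hfun : (fun ω => Z ω j)
        = fun ω => (∑ l, M j l * (X ω l - μ l)) + μ j := by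
      funext ω
      have := hZc ω j
      linarith
    show (∫ ω, Z ω j) = μ j
    rw [hfun, integral_add (integrable_finset_sum _ fun l _ => (hXcint l).const_mul _)
        (integrable_const _),
      integral_finset_sum _ (fun l _ => (hXcint l).const_mul _)]
    simp [integral_const_mul, hmean0, measure_univ]
  have hmeanPX : ∀ i, vecMean (fun ω => P.mulVec (X ω)) i = ∑ k, P i k * μ k := by
    intro i
    show (∫ ω, P.mulVec (X ω) i) = _
    simp only [Matrix.mulVec, dotProduct]
    rw [integral_finset_sum _ (fun k _ => (hXint k).const_mul _)]
    refine Finset.sum_congr rfl fun k _ => ?_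
    rw [integral_const_mul, hμ]
    rfl
  have hsym : ∀ a b, M a b = M b a := by
    intro a b
    rw [hMdef]
    simp only [Matrix.mul_apply, Matrix.transpose_apply]
    exact Finset.sum_congr rfl fun t _ => mul_comm _ _
  -- part (i)
  have key : crossCov (fun ω => P.mulVec (X ω)) Z = P * crossCov X X * M := by
    ext i j
    have lhs_eq : crossCov (fun ω => P.mulVec (X ω)) Z i j
        = ∫ ω, (P.mulVec (X ω) i - vecMean (fun ω => P.mulVec (X ω)) i)
            * (Z ω j - vecMean Z j) := rfl
    rw [lhs_eq]
    have hfun : (fun ω => (P.mulVec (X ω) i - vecMean (fun ω => P.mulVec (X ω)) i)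
          * (Z ω j - vecMean Z j))
        = fun ω => ∑ k, ∑ l, (P i k * M j l) * ((X ω k - μ k) * (X ω l - μ l)) := by
      funext ω
      rw [hmeanPX, hmeanZ, hZc]
      simp only [Matrix.mulVec, dotProduct, ← Finset.sum_sub_distrib, ← mul_sub]
      rw [Finset.sum_mul_sum]
      exact Finset.sum_congr rfl fun k _ => Finset.sum_congr rfl fun l _ => by ring
    rw [hfun, integral_finset_sum _
      (fun k _ => integrable_finset_sum _ fun l _ => (hprod k l).const_mul _)]
    have hterm : ∀ k, (∫ ω, ∑ l, (P i k * M j l) * ((X ω k - μ k) * (X ω l - μ l)))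
        = ∑ l, (P i k * M j l) * crossCov X X k l := by
      intro k
      rw [integral_finset_sum _ (fun l _ => (hprod k l).const_mul _)]
      exact Finset.sum_congr rfl fun l _ => by rw [integral_const_mul, hC]
    simp only [hterm]
    simp only [Matrix.mul_apply]
    rw [Finset.sum_comm]
    refine Finset.sum_congr rfl fun l _ => ?_
    rw [Finset.sum_mul]
    refine Finset.sum_congr rfl fun k _ => ?_
    rw [hsym j l]
    ring
  -- matrix algebra for part (ii)
  have ha : Vᵀ * W = (1 : Matrix (Fin D) (Fin D) ℝ).submatrix id f := by
    ext i k
    have h1 := congrFun (congrFun hV i) (f k)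
    simp only [Matrix.mul_apply] at h1
    simpa [hW, Matrix.mul_apply, Matrix.submatrix_apply, id, Matrix.one_apply] using h1
  have hb : Matrix.diagonal s * (1 : Matrix (Fin D) (Fin D) ℝ).submatrix id f
      = (1 : Matrix (Fin D) (Fin D) ℝ).submatrix id f
        * Matrix.diagonal (fun k => s (f k)) := by
    ext i k
    simp only [Matrix.diagonal_mul, Matrix.mul_diagonal, Matrix.submatrix_apply,
      Matrix.one_apply, id]
    by_cases h : i = f k <;> simp [h]
  have hc : V * (1 : Matrix (Fin D) (Fin D) ℝ).submatrix id f = W := by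
    ext i k
    simp [hW, Matrix.mul_apply, Matrix.submatrix_apply, Matrix.one_apply, mul_ite]
  have hd : Wᵀ * W = (1 : Matrix (Fin r) (Fin r) ℝ) := by
    ext k l
    have h1 := congrFun (congrFun hV (f k)) (f l)
    simp only [Matrix.mul_apply, Matrix.transpose_apply] at h1
    simp only [hW, Matrix.mul_apply, Matrix.transpose_apply, Matrix.submatrix_apply, id]
    rw [h1, Matrix.one_apply, Matrix.one_apply]
    simp [hf.eq_iff]
  have hCM : crossCov X X * M
      = W * Matrix.diagonal (fun k => s (f k)) * Wᵀ := by
    rw [hMdef, hCovX]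
    have e1 : V * Matrix.diagonal s * Vᵀ * (W * Wᵀ)
        = V * (Matrix.diagonal s * (Vᵀ * W)) * Wᵀ := by
      simp only [Matrix.mul_assoc]
    rw [e1, ha, hb, ← Matrix.mul_assoc, hc]
  refine ⟨key, ?_, ?_⟩
  · intro h0
    rw [key] at h0
    have h1 : P * (W * Matrix.diagonal (fun k => s (f k)) * Wᵀ) = 0 := by
      rw [← hCM, ← Matrix.mul_assoc, h0]
    have h3 : P * (W * Matrix.diagonal (fun k => s (f k)) * Wᵀ) * W = 0 := by
      rw [h1, Matrix.zero_mul]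
    have h2 : P * W * Matrix.diagonal (fun k => s (f k)) = 0 := by
      calc P * W * Matrix.diagonal (fun k => s (f k))
          = P * W * Matrix.diagonal (fun k => s (f k))
            * (1 : Matrix (Fin r) (Fin r) ℝ) := (Matrix.mul_one _).symm
        _ = P * W * Matrix.diagonal (fun k => s (f k)) * (Wᵀ * W) := by rw [hd]
        _ = P * (W * Matrix.diagonal (fun k => s (f k)) * Wᵀ) * W := by
            simp only [Matrix.mul_assoc]
        _ = 0 := h3
    have hdiag : Matrix.diagonal (fun k => s (f k))
        * Matrix.diagonal (fun k => (s (f k))⁻¹) = (1 : Matrix (Fin r) (Fin r) ℝ) := by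
      rw [Matrix.diagonal_mul_diagonal]
      have he : (fun k => s (f k) * (s (f k))⁻¹) = fun _ => (1 : ℝ) := by
        funext k; exact mul_inv_cancel₀ (hfs k).ne'
      rw [he, Matrix.diagonal_one]
    calc P * W
        = P * W * (Matrix.diagonal (fun k => s (f k))
            * Matrix.diagonal (fun k => (s (f k))⁻¹)) := by rw [hdiag, Matrix.mul_one]
      _ = P * W * Matrix.diagonal (fun k => s (f k))
            * Matrix.diagonal (fun k => (s (f k))⁻¹) := by simp only [Matrix.mul_assoc]
      _ = 0 := by rw [h2, Matrix.zero_mul]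
  · intro h0
    rw [key, Matrix.mul_assoc, hCM, ← Matrix.mul_assoc, ← Matrix.mul_assoc, h0,
      Matrix.zero_mul, Matrix.zero_mul]
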